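/- The map h, which flips the u_1(x)-th U-step touching the line y=1 of a path x ∈ L_{2k,k+1}, is a well-defined bijection from L_{2k,k+1} to L_{2k,k} \ D_{2k}^0, and its inverse is the map g', which flips the d_0(x')-th D-step touching the line y=0 of a path x' ∈ L_{2k,k} \ D_{2k}^0. -/

import Mathlib

/-- Value of a step: `true` = U-step (+1), `false` = D-step (-1). -/
def stepVal (b : Bool) : ℤ := if b then 1 else -1

/-- Height of the lattice path `x` after its first `i` steps. -/
def pathHeight (x : List Bool) (i : ℕ) : ℤ := ((x.take i).map stepVal).sum

/-- The step at position `i` (0-indexed) is a U-step. -/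
def isU (x : List Bool) (i : ℕ) : Bool := x.getD i true

/-- The step at position `i` (0-indexed) is a D-step. -/
def isD (x : List Bool) (i : ℕ) : Bool := !(x.getD i true)

/-- Number of flaws: D-steps lying below the line y=0 (i.e. starting at height ≤ 0). -/
def flaws (x : List Bool) : ℕ :=
  ((List.range x.length).filter (fun i => isD x i && decide (pathHeight x i ≤ 0))).length

/-- `DyckSet k e` = the set `D_{2k}^e` of Dyck paths with `2k` steps and `e` flaws. -/
def DyckSet (k e : ℕ) : Set (List Bool) :=
  {x | x.length = 2*k ∧ x.count true = k ∧ flaws x = e}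

/-- `LSet k m` = the set `L_{2k,m}` of lattice paths with `2k` steps and `m` U-steps. -/
def LSet (k m : ℕ) : Set (List Bool) :=
  {x | x.length = 2*k ∧ x.count true = m}

/-- `d_c(x)`: number of D-steps of `x` starting on the line `y = c`. -/
def dstart (x : List Bool) (c : ℤ) : ℕ :=
  ((List.range x.length).filter (fun i => isD x i && decide (pathHeight x i = c))).length

/-- `u_c(x)`: number of U-steps of `x` starting on the line `y = c`. -/
def ustart (x : List Bool) (c : ℤ) : ℕ :=
  ((List.range x.length).filter (fun i => isU x i && decide (pathHeight x i = c))).length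

/-- Positions (in increasing order) of D-steps of `x` touching the line `y = c`
(a D-step at position `i` goes from height `pathHeight x i` down to `pathHeight x i - 1`,
so it touches `y = c` iff its start height is `c` or `c+1`). -/
def dtouch (x : List Bool) (c : ℤ) : List ℕ :=
  (List.range x.length).filter
    (fun i => isD x i && (decide (pathHeight x i = c) || decide (pathHeight x i = c+1)))

/-- Positions (in increasing order) of U-steps of `x` touching the line `y = c`
(a U-step at position `i` goes from height `pathHeight x i` up to `pathHeight x i + 1`,
so it touches `y = c` iff its start height is `c` or `c-1`). -/
def utouch (x : List Bool) (c : ℤ) : List ℕ :=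
  (List.range x.length).filter
    (fun i => isU x i && (decide (pathHeight x i = c) || decide (pathHeight x i = c-1)))

/-- Position (0-indexed) flipped by `g`: the `(d_0(x)+1)`-th D-step touching `y=0`. -/
def gIdx (x : List Bool) : ℕ := (dtouch x 0).getD (dstart x 0) 0

/-- The map `g`: flip the `(d_0(x)+1)`-th D-step of `x` touching the line `y=0`. -/
def gMap (x : List Bool) : List Bool := x.set (gIdx x) true

/-- Position (0-indexed) flipped by `h`: the `u_1(x)`-th U-step touching `y=1`. -/
def hIdx (x : List Bool) : ℕ := (utouch x 1).getD (ustart x 1 - 1) 0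

/-- The map `h`: flip the `u_1(x)`-th U-step of `x` touching the line `y=1`. -/
def hMap (x : List Bool) : List Bool := x.set (hIdx x) false

/-- Position (0-indexed) flipped by `g'`: the `d_0(x)`-th D-step touching `y=0`. -/
def g'Idx (x : List Bool) : ℕ := (dtouch x 0).getD (dstart x 0 - 1) 0

/-- The map `g'`: flip the `d_0(x)`-th D-step of `x` touching the line `y=0`. -/
def g'Map (x : List Bool) : List Bool := x.set (g'Idx x) true

/-- Position (0-indexed) flipped by `h'`: the `(u_1(x)+1)`-th U-step touching `y=1`. -/
def h'Idx (x : List Bool) : ℕ := (utouch x 1).getD (ustart x 1) 0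

/-- The map `h'`: flip the `(u_1(x)+1)`-th U-step of `x` touching the line `y=1`. -/
def h'Map (x : List Bool) : List Bool := x.set (h'Idx x) false

/-- The minimum-change map `f := h ∘ g`. -/
def fMap (x : List Bool) : List Bool := hMap (gMap x)

/-- `piSeq n x`: the sequence of (1-indexed) positions flipped by the successive
applications `g, h, g, h, ...` over `n` applications of `f` starting from `x`. -/
def piSeq : ℕ → List Bool → List ℕ
  | 0, _ => []
  | n+1, x => (gIdx x + 1) :: (hIdx (gMap x) + 1) :: piSeq n (fMap x)

/-- Reverse the step sequence and complement every step. -/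
def revComp (x : List Bool) : List Bool := x.reverse.map (fun b => !b)



-- ===== helper lemmas =====

def hsum (x : List Bool) : ℤ := (x.map stepVal).sum

@[simp] lemma hsum_nil : hsum [] = 0 := rfl
@[simp] lemma hsum_cons (b : Bool) (t : List Bool) : hsum (b :: t) = stepVal b + hsum t := rfl
@[simp] lemma hsum_append (u v : List Bool) : hsum (u ++ v) = hsum u + hsum v := by
  simp [hsum]

lemma pathHeight_eq (x : List Bool) (i : ℕ) : pathHeight x i = hsum (x.take i) := rfl

@[simp] lemma pathHeight_zero (x : List Bool) : pathHeight x 0 = 0 := rfl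
@[simp] lemma pathHeight_succ_cons (b : Bool) (t : List Bool) (i : ℕ) :
    pathHeight (b :: t) (i+1) = stepVal b + pathHeight t i := by
  simp [pathHeight]

def cnt (P : Bool → ℤ → Bool) : List Bool → ℤ → ℕ
  | [], _ => 0
  | b :: t, a => (if P b a then 1 else 0) + cnt P t (a + stepVal b)

@[simp] lemma cnt_nil (P : Bool → ℤ → Bool) (a : ℤ) : cnt P [] a = 0 := rfl
@[simp] lemma cnt_cons (P : Bool → ℤ → Bool) (b : Bool) (t : List Bool) (a : ℤ) :
    cnt P (b :: t) a = (if P b a then 1 else 0) + cnt P t (a + stepVal b) := rfl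

lemma cnt_append (P : Bool → ℤ → Bool) (u v : List Bool) (a : ℤ) :
    cnt P (u ++ v) a = cnt P u a + cnt P v (a + hsum u) := by
  induction u generalizing a with
  | nil => simp
  | cons b t ih => simp [ih, add_assoc]

lemma cnt_congr {P Q : Bool → ℤ → Bool} (h : ∀ b a, P b a = Q b a) :
    ∀ (v : List Bool) (a : ℤ), cnt P v a = cnt Q v a := by
  intro v; induction v with
  | nil => simp
  | cons b t ih => intro a; simp [h, ih]

lemma cnt_shift (P : Bool → ℤ → Bool) (t : ℤ) :
    ∀ (v : List Bool) (a : ℤ), cnt P v a = cnt (fun b h => P b (h - t)) v (a + t) := by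
  intro v; induction v with
  | nil => simp
  | cons b w ih =>
    intro a
    simp only [cnt_cons, ih (a + stepVal b), add_sub_cancel_right]
    rw [show a + stepVal b + t = a + t + stepVal b by ring]

lemma cnt_or {P Q : Bool → ℤ → Bool} (h : ∀ b a, ¬(P b a = true ∧ Q b a = true)) :
    ∀ (v : List Bool) (a : ℤ), cnt (fun b a => P b a || Q b a) v a = cnt P v a + cnt Q v a := by
  intro v; induction v with
  | nil => simp
  | cons b t ih =>
    intro a
    have := h b a
    rcases hP : P b a <;> rcases hQ : Q b a <;> simp_all [ih] <;> omega

lemma crossing (c : ℤ) :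
    ∀ (v : List Bool) (a : ℤ),
    (cnt (fun b h => b && decide (h = c)) v a : ℤ) - cnt (fun b h => !b && decide (h = c+1)) v a
    = (if a ≤ c ∧ c < a + hsum v then 1 else 0) - (if a + hsum v ≤ c ∧ c < a then 1 else 0) := by
  intro v; induction v with
  | nil => simp
  | cons b w ih =>
    intro a
    have h := ih (a + stepVal b)
    rcases b <;>
    · simp only [cnt_cons, hsum_cons, stepVal, if_true, if_false, Bool.true_and,
        Bool.false_and, Bool.not_true, Bool.not_false, decide_eq_true_eq] at h ⊢
      push_cast at h ⊢
      split_ifs at h ⊢ <;> omega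

lemma length_filter_range (P : Bool → ℤ → Bool) :
    ∀ (x : List Bool) (a : ℤ),
    ((List.range x.length).filter (fun i => P (x.getD i true) (a + pathHeight x i))).length
      = cnt P x a := by
  intro x; induction x with
  | nil => simp
  | cons b t ih =>
    intro a
    rw [List.length_cons, List.range_succ_eq_map, List.filter_cons]
    have h0 : P ((b :: t).getD 0 true) (a + pathHeight (b :: t) 0) = P b a := by simp
    rw [h0, List.filter_map]
    have hcong : ∀ i ∈ List.range t.length,
        ((fun i => P ((b :: t).getD i true) (a + pathHeight (b :: t) i)) ∘ Nat.succ) i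
        = (fun i => P (t.getD i true) ((a + stepVal b) + pathHeight t i)) i := by
      intro i _
      simp [Function.comp, add_assoc]
    rw [List.filter_congr hcong]
    rcases h : P b a <;>
      simp only [h, if_true, if_false, List.length_map, List.length_cons, cnt_cons,
        Bool.false_eq_true] <;>
      rw [ih (a + stepVal b)] <;> omega

lemma length_filter_range_take (P : Bool → ℤ → Bool) (x : List Bool) (p : ℕ)
    (hp : p ≤ x.length) (a : ℤ) :
    ((List.range p).filter (fun i => P (x.getD i true) (a + pathHeight x i))).length
      = cnt P (x.take p) a := by
  have hlen : (x.take p).length = p := by simp [hp]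
  have := length_filter_range P (x.take p) a
  rw [hlen] at this
  rw [← this]
  apply congrArg
  apply List.filter_congr
  intro i hi
  rw [List.mem_range] at hi
  have h1 : (x.take p).getD i true = x.getD i true := by
    simp [List.getD_eq_getElem?_getD, List.getElem?_take, hi]
  have h2 : pathHeight (x.take p) i = pathHeight x i := by
    simp [pathHeight, List.take_take, Nat.min_eq_left (le_of_lt hi)]
  rw [h1, h2]

lemma getD_append_length {α : Type*} (A : List α) (c : α) (C : List α) (d : α) :
    (A ++ c :: C).getD A.length d = c := by
  induction A with
  | nil => simp
  | cons a A ih => simpa using ih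

lemma set_append_length {α : Type*} (A : List α) (c : α) (C : List α) (b : α) :
    (A ++ c :: C).set A.length b = A ++ b :: C := by
  induction A with
  | nil => simp
  | cons a A ih => simpa using ih

lemma getD_filter_range_of (n p : ℕ) (q : ℕ → Bool) (hp : p < n) (hq : q p = true) :
    ((List.range p).filter q).length < ((List.range n).filter q).length ∧
    ((List.range n).filter q).getD (((List.range p).filter q).length) 0 = p := by
  have hn : n = (p + 1) + (n - (p+1)) := by omega
  rw [hn, List.range_add, List.range_succ, List.filter_append, List.filter_append,
    List.filter_cons]
  simp only [hq, if_pos]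
  constructor
  · simp only [List.length_append, List.length_cons]
    omega
  · rw [List.append_assoc]
    simpa using getD_append_length ((List.range p).filter q) p _ 0

lemma filter_range_getD_spec (n j : ℕ) (q : ℕ → Bool)
    (hj : j < ((List.range n).filter q).length) :
    ((List.range n).filter q).getD j 0 < n ∧
    q (((List.range n).filter q).getD j 0) = true ∧
    ((List.range (((List.range n).filter q).getD j 0)).filter q).length = j := by
  set L := (List.range n).filter q with hL
  have hget : L.getD j 0 = L[j]'hj := by
    rw [List.getD_eq_getElem?_getD, List.getElem?_eq_getElem hj]; rfl
  set p := L.getD j 0 with hpdef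
  have hmem : p ∈ L := by rw [hget]; exact List.getElem_mem hj
  have hq : q p = true := (List.mem_filter.mp hmem).2
  have hpn : p < n := List.mem_range.mp (List.mem_filter.mp hmem).1
  refine ⟨hpn, hq, ?_⟩
  obtain ⟨hlt, heq⟩ := getD_filter_range_of n p q hpn hq
  set j' := ((List.range p).filter q).length with hj'
  have hget' : L.getD j' 0 = L[j']'hlt := by
    rw [List.getD_eq_getElem?_getD, List.getElem?_eq_getElem hlt]; rfl
  have hnd : L.Nodup := List.nodup_range.filter q
  have : L[j']'hlt = L[j]'hj := by rw [← hget', heq, hget]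
  have := (List.Nodup.getElem_inj_iff hnd).mp this
  omega

lemma hsum_eq_count : ∀ x : List Bool, hsum x = 2 * (x.count true : ℤ) - x.length := by
  intro x; induction x with
  | nil => simp
  | cons b t ih =>
    rcases b <;> simp [stepVal, ih, List.count_cons] <;> push_cast <;> ring

lemma no_flaw_no_Um1 :
    ∀ (v : List Bool) (a : ℤ), 0 ≤ a →
    cnt (fun b h => !b && decide (h ≤ 0)) v a = 0 →
    cnt (fun b h => b && decide (h = -1)) v a = 0 := by
  intro v; induction v with
  | nil => simp
  | cons b w ih =>
    intro a ha h
    rcases b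
    · by_cases hle : a ≤ 0
      · simp [stepVal, hle] at h
      · simp only [cnt_cons, stepVal, Bool.not_false, Bool.true_and, decide_eq_true_eq,
          if_neg hle, Bool.false_and, Bool.false_eq_true, if_false, zero_add] at h ⊢
        exact ih _ (by omega) h
    · simp only [cnt_cons, stepVal, Bool.not_true, Bool.false_and, Bool.false_eq_true,
        if_false, if_true, zero_add, Bool.true_and, decide_eq_true_eq] at h ⊢
      rw [if_neg (by omega : ¬ (a = -1))]
      simpa using ih _ (by omega) h

lemma flaw_imp_D0 :
    ∀ (v : List Bool) (a : ℤ), 0 ≤ a →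
    cnt (fun b h => !b && decide (h ≤ 0)) v a ≠ 0 →
    cnt (fun b h => !b && decide (h = 0)) v a ≠ 0 := by
  intro v; induction v with
  | nil => simp
  | cons b w ih =>
    intro a ha h
    rcases b
    · by_cases hle : a ≤ 0
      · have h0 : a = 0 := le_antisymm hle ha
        simp [stepVal, h0]
      · simp only [cnt_cons, stepVal, Bool.not_false, Bool.true_and, decide_eq_true_eq,
          if_neg hle, Bool.false_and, Bool.false_eq_true, if_false, zero_add] at h ⊢
        rw [if_neg (by omega : ¬ (a = 0))]
        simp only [zero_add]
        exact ih _ (by omega) h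
    · simp only [cnt_cons, stepVal, Bool.not_true, Bool.false_and, Bool.false_eq_true,
        if_false, if_true, zero_add] at h ⊢
      exact ih _ (by omega) h

def cU (c : ℤ) : List Bool → ℤ → ℕ := cnt (fun b h => b && decide (h = c))
def cD (c : ℤ) : List Bool → ℤ → ℕ := cnt (fun b h => !b && decide (h = c))

lemma crossing' (c c' : ℤ) (hcc : c' = c + 1) (v : List Bool) (a : ℤ) :
    (cU c v a : ℤ) - cD c' v a
    = (if a ≤ c ∧ c < a + hsum v then 1 else 0) - (if a + hsum v ≤ c ∧ c < a then 1 else 0) := by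
  subst hcc; exact crossing c v a

lemma cU_trans (c c' : ℤ) : ∀ (v : List Bool) (a a' : ℤ), a - c = a' - c' →
    cU c v a = cU c' v a' := by
  intro v; induction v with
  | nil => intro a a' _; rfl
  | cons b w ih =>
    intro a a' h
    unfold cU at *
    simp only [cnt_cons]
    rw [ih (a + stepVal b) (a' + stepVal b) (by omega)]
    congr 1
    rcases b <;> simp <;> split_ifs <;> omega

lemma cD_trans (c c' : ℤ) : ∀ (v : List Bool) (a a' : ℤ), a - c = a' - c' →
    cD c v a = cD c' v a' := by
  intro v; induction v with
  | nil => intro a a' _; rfl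
  | cons b w ih =>
    intro a a' h
    unfold cD at *
    simp only [cnt_cons]
    rw [ih (a + stepVal b) (a' + stepVal b) (by omega)]
    congr 1
    rcases b <;> simp <;> split_ifs <;> omega

lemma cntU_two (c c' : ℤ) (h : c ≠ c') (v : List Bool) (a : ℤ) :
    cnt (fun b h => b && (decide (h = c) || decide (h = c'))) v a = cU c v a + cU c' v a := by
  rw [cnt_congr (Q := fun b h => (b && decide (h = c)) || (b && decide (h = c')))
    (by intro b h; rcases b <;> simp)]
  exact cnt_or (by intro b hh ⟨h1, h2⟩; rcases b <;> simp_all) v a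

lemma cntD_two (c c' : ℤ) (h : c ≠ c') (v : List Bool) (a : ℤ) :
    cnt (fun b h => !b && (decide (h = c) || decide (h = c'))) v a = cD c v a + cD c' v a := by
  rw [cnt_congr (Q := fun b h => (!b && decide (h = c)) || (!b && decide (h = c')))
    (by intro b h; rcases b <;> simp)]
  exact cnt_or (by intro b hh ⟨h1, h2⟩; rcases b <;> simp_all) v a

lemma filter_range_eq_cnt (x : List Bool) (P : Bool → ℤ → Bool) (q : ℕ → Bool)
    (hq : ∀ i, i < x.length → q i = P (x.getD i true) (0 + pathHeight x i)) :
    ((List.range x.length).filter q).length = cnt P x 0 := by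
  rw [← length_filter_range P x 0]
  congr 1
  exact List.filter_congr (fun i hi => hq i (List.mem_range.mp hi))

lemma filter_range_take_eq_cnt (x : List Bool) (P : Bool → ℤ → Bool) (q : ℕ → Bool)
    (p : ℕ) (hp : p ≤ x.length)
    (hq : ∀ i, i < p → q i = P (x.getD i true) (0 + pathHeight x i)) :
    ((List.range p).filter q).length = cnt P (x.take p) 0 := by
  rw [← length_filter_range_take P x p hp 0]
  congr 1
  exact List.filter_congr (fun i hi => hq i (List.mem_range.mp hi))


lemma dir1 (k : ℕ) (x : List Bool) (hlen : x.length = 2*k) (hcnt : x.count true = k+1) :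
    (hMap x).length = 2*k ∧ (hMap x).count true = k ∧ flaws (hMap x) ≠ 0 ∧
    g'Map (hMap x) = x := by
  classical
  have hsx : hsum x = 2 := by
    rw [hsum_eq_count, hlen, hcnt]; push_cast; ring
  set qA : ℕ → Bool :=
    fun i => isU x i && (decide (pathHeight x i = 1) || decide (pathHeight x i = 1-1))
    with hqAdef
  have hA : utouch x 1 = (List.range x.length).filter qA := rfl
  have hu1 : ustart x 1 = cU 1 x 0 := by
    apply filter_range_eq_cnt
    intro i _
    simp [isU]
  have hu1ge : 1 ≤ ustart x 1 := by
    have h := crossing' 1 2 (by norm_num) x 0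
    rw [hsx] at h
    norm_num at h
    rw [hu1]; omega
  have hu1le : ustart x 1 ≤ ((List.range x.length).filter qA).length := by
    unfold ustart
    rw [← List.countP_eq_length_filter, ← List.countP_eq_length_filter]
    apply List.countP_mono_left
    intro i _ h
    rw [hqAdef]
    simp only [Bool.and_eq_true, Bool.or_eq_true] at h ⊢
    exact ⟨h.1, Or.inl h.2⟩
  have hj : ustart x 1 - 1 < ((List.range x.length).filter qA).length := by omega
  obtain ⟨hpn, hqAp, hcountA⟩ := filter_range_getD_spec x.length (ustart x 1 - 1) qA hj
  have hp_def : hIdx x = ((List.range x.length).filter qA).getD (ustart x 1 - 1) 0 := by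
    unfold hIdx
    rw [hA]
  rw [← hp_def] at hpn hqAp hcountA
  set p := hIdx x with hp0
  rw [hqAdef] at hqAp
  simp only [Bool.and_eq_true, Bool.or_eq_true, decide_eq_true_eq, isU] at hqAp
  obtain ⟨hxgetD, hs⟩ := hqAp
  have hxp : x[p]'hpn = true := by
    rw [← List.getD_eq_getElem x true hpn]; exact hxgetD
  set u := x.take p with hu_def
  set v := x.drop (p+1) with hv_def
  have hu_len : u.length = p := by
    rw [hu_def]; simp [hpn.le]
  have hx : u ++ true :: v = x := by
    rw [hu_def, hv_def, ← hxp, List.getElem_cons_drop, List.take_append_drop]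
  have hsu : pathHeight x p = hsum u := rfl
  have hS : hsum u = 1 ∨ hsum u = 0 := by
    rw [← hsu]; rcases hs with h | h
    · exact Or.inl h
    · right; rw [h]; norm_num
  have hsv : hsum v = 1 - hsum u := by
    rw [← hx] at hsx
    simp only [hsum_append, hsum_cons, stepVal, if_true] at hsx
    omega
  have hy : hMap x = u ++ false :: v := by
    show x.set p false = _
    conv_lhs => rw [← hx]
    rw [← hu_len]
    exact set_append_length u true v false
  -- basic facts about hMap x
  have hylen : (hMap x).length = 2*k := by rw [← hlen]; exact List.length_set
  have hycnt : (hMap x).count true = k := by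
    rw [← hx] at hcnt
    rw [hy]
    simp only [List.count_append, List.count_cons] at hcnt ⊢
    norm_num at hcnt ⊢
    omega
  -- crossing facts
  have F1 : (cU 0 u 0 : ℤ) - cD 1 u 0 = if hsum u = 1 then 1 else 0 := by
    rw [crossing' 0 1 (by norm_num) u 0]
    split_ifs <;> omega
  have F2 : (cU (-1) v (hsum u - 1) : ℤ) - cD 0 v (hsum u - 1) = if hsum u = 0 then 1 else 0 := by
    rw [crossing' (-1) 0 (by norm_num) v (hsum u - 1), hsv]
    split_ifs <;> omega
  have F3 : cU 1 u 0 + cU 0 u 0 = ustart x 1 - 1 := by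
    have h := filter_range_take_eq_cnt x
      (fun b h => b && (decide (h = 1) || decide (h = (1:ℤ)-1))) qA p hpn.le
      (by intro i _; rw [hqAdef]; simp [isU])
    rw [cntU_two 1 ((1:ℤ)-1) (by norm_num)] at h
    have h10 : cU ((1:ℤ)-1) u 0 = cU 0 u 0 := by norm_num
    rw [← hu_def, h10] at h
    omega
  have F4 : ustart x 1 = cU 1 u 0 + (if hsum u = 1 then 1 else 0) + cU (-1) v (hsum u - 1) := by
    rw [hu1]
    conv_lhs => rw [← hx]
    unfold cU
    rw [cnt_append, cnt_cons]
    simp only [hsum_append, zero_add, stepVal, if_true, Bool.true_and, decide_eq_true_eq]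
    rw [show cnt (fun b h => b && decide (h = 1)) v (hsum u + 1)
        = cnt (fun b h => b && decide (h = -1)) v (hsum u - 1) from
      cU_trans 1 (-1) v (hsum u + 1) (hsum u - 1) (by ring)]
    split_ifs <;> omega
  -- the flipped-step facts for (hMap x)
  set qB : ℕ → Bool :=
    fun i => isD (hMap x) i &&
      (decide (pathHeight (hMap x) i = 0) || decide (pathHeight (hMap x) i = 0+1))
    with hqBdef
  have hB : dtouch (hMap x) 0 = (List.range (hMap x).length).filter qB := rfl
  have hpylen : p < (hMap x).length := by
    rw [show (hMap x).length = x.length from List.length_set]; exact hpn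
  have hytake : (hMap x).take p = u := by
    rw [hy, ← hu_len, List.take_left]
  have hphyp : pathHeight (hMap x) p = hsum u := by
    rw [pathHeight_eq, hytake]
  have hqBp : qB p = true := by
    rw [hqBdef]
    simp only [Bool.and_eq_true, Bool.or_eq_true, decide_eq_true_eq, isD]
    constructor
    · rw [hy, ← hu_len, getD_append_length]
      rfl
    · rw [hphyp]; rcases hS with h | h
      · right; rw [h]; norm_num
      · left; exact h
  have hd0 : dstart (hMap x) 0
      = cD 0 u 0 + (if hsum u = 0 then 1 else 0) + cD 0 v (hsum u - 1) := by
    have hb : dstart (hMap x) 0 = cD 0 (hMap x) 0 := by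
      apply filter_range_eq_cnt
      intro i _
      simp [isD]
    rw [hb, hy]
    unfold cD
    rw [cnt_append, cnt_cons]
    simp only [hsum_append, zero_add, stepVal, Bool.not_false, Bool.true_and,
      decide_eq_true_eq, if_neg, Bool.false_eq_true, ite_false]
    rw [show cnt (fun b h => !b && decide (h = 0)) v (hsum u + -1)
        = cnt (fun b h => !b && decide (h = 0)) v (hsum u - 1) from
      cD_trans 0 0 v (hsum u + -1) (hsum u - 1) (by ring)]
    split_ifs <;> omega
  have hcountB : ((List.range p).filter qB).length = dstart (hMap x) 0 - 1 := by
    have h := filter_range_take_eq_cnt (hMap x)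
      (fun b h => !b && (decide (h = 0) || decide (h = (0:ℤ)+1))) qB p hpylen.le
      (by intro i _; rw [hqBdef]; simp [isD])
    rw [cntD_two 0 ((0:ℤ)+1) (by norm_num), hytake] at h
    have h01 : cD ((0:ℤ)+1) u 0 = cD 1 u 0 := by norm_num
    rw [h01] at h
    rw [h]
    rcases hS with hS1 | hS0
    · rw [hS1] at F1 F2 hd0
      rw [hS1] at F4
      norm_num at F1 F2 hd0 F4
      omega
    · rw [hS0] at F1 F2 hd0
      rw [hS0] at F4
      norm_num at F1 F2 hd0 F4
      omega
  have hg'Idx : g'Idx (hMap x) = p := by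
    obtain ⟨_, hget⟩ := getD_filter_range_of (hMap x).length p qB hpylen hqBp
    rw [hcountB] at hget
    unfold g'Idx
    rw [hB]
    exact hget
  have hg'Map : g'Map (hMap x) = x := by
    show (hMap x).set (g'Idx (hMap x)) true = x
    rw [hg'Idx, hy, ← hu_len, set_append_length]
    exact hx
  -- flaws
  have hfl : flaws (hMap x)
      = cnt (fun b h => !b && decide (h ≤ 0)) u 0 + (if hsum u ≤ 0 then 1 else 0)
        + cnt (fun b h => !b && decide (h ≤ 0)) v (hsum u - 1) := by
    have hb : flaws (hMap x) = cnt (fun b h => !b && decide (h ≤ 0)) (hMap x) 0 := by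
      apply filter_range_eq_cnt
      intro i _
      simp [isD]
    rw [hb, hy, cnt_append, cnt_cons]
    simp only [hsum_append, zero_add, stepVal, Bool.not_false, Bool.true_and,
      decide_eq_true_eq, Bool.false_eq_true, ite_false]
    rw [show cnt (fun b h => !b && decide (h ≤ 0)) v (hsum u + -1)
        = cnt (fun b h => !b && decide (h ≤ 0)) v (hsum u - 1) from by
      rw [show hsum u + -1 = hsum u - 1 by ring]]
    split_ifs <;> omega
  have hflne : flaws (hMap x) ≠ 0 := by
    rcases hS with hS1 | hS0
    · intro h0
      rw [hS1] at hfl F2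
      rw [hS1] at F4
      norm_num at hfl F2 F4
      have hv0 : cnt (fun b h => !b && decide (h ≤ 0)) v 0 = 0 := by omega
      have := no_flaw_no_Um1 v 0 (le_refl 0) hv0
      have hcu : cU (-1) v 0 = 0 := this
      rw [hcu] at F4
      omega
    · rw [hS0] at hfl
      norm_num at hfl
      omega
  exact ⟨hylen, hycnt, hflne, hg'Map⟩


lemma dir2 (k : ℕ) (y : List Bool) (hlen : y.length = 2*k) (hcnt : y.count true = k)
    (hfl : flaws y ≠ 0) :
    (g'Map y).length = 2*k ∧ (g'Map y).count true = k+1 ∧ hMap (g'Map y) = y := by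
  classical
  have hsy : hsum y = 0 := by
    rw [hsum_eq_count, hlen, hcnt]; push_cast; ring
  set qB : ℕ → Bool :=
    fun i => isD y i && (decide (pathHeight y i = 0) || decide (pathHeight y i = 0+1))
    with hqBdef
  have hB : dtouch y 0 = (List.range y.length).filter qB := rfl
  have hd0b : dstart y 0 = cD 0 y 0 := by
    apply filter_range_eq_cnt
    intro i _
    simp [isD]
  have hflb : flaws y = cnt (fun b h => !b && decide (h ≤ 0)) y 0 := by
    apply filter_range_eq_cnt
    intro i _
    simp [isD]
  have hd0ge : 1 ≤ dstart y 0 := by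
    have := flaw_imp_D0 y 0 (le_refl 0) (by rw [← hflb]; exact hfl)
    have h2 : cD 0 y 0 ≠ 0 := this
    omega
  have hd0le : dstart y 0 ≤ ((List.range y.length).filter qB).length := by
    unfold dstart
    rw [← List.countP_eq_length_filter, ← List.countP_eq_length_filter]
    apply List.countP_mono_left
    intro i _ h
    rw [hqBdef]
    simp only [Bool.and_eq_true, Bool.or_eq_true] at h ⊢
    exact ⟨h.1, Or.inl h.2⟩
  have hj : dstart y 0 - 1 < ((List.range y.length).filter qB).length := by omega
  obtain ⟨hpn, hqBp, hcountB⟩ := filter_range_getD_spec y.length (dstart y 0 - 1) qB hj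
  have hp_def : g'Idx y = ((List.range y.length).filter qB).getD (dstart y 0 - 1) 0 := by
    unfold g'Idx
    rw [hB]
  rw [← hp_def] at hpn hqBp hcountB
  set p := g'Idx y with hp0
  rw [hqBdef] at hqBp
  simp only [Bool.and_eq_true, Bool.or_eq_true, decide_eq_true_eq, isD,
    Bool.not_eq_true'] at hqBp
  obtain ⟨hygetD, hs⟩ := hqBp
  have hyp : y[p]'hpn = false := by
    rw [← List.getD_eq_getElem y true hpn]; exact hygetD
  set u := y.take p with hu_def
  set v := y.drop (p+1) with hv_def
  have hu_len : u.length = p := by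
    rw [hu_def]; simp [hpn.le]
  have hx : u ++ false :: v = y := by
    rw [hu_def, hv_def, ← hyp, List.getElem_cons_drop, List.take_append_drop]
  have hsu : pathHeight y p = hsum u := rfl
  have hS : hsum u = 1 ∨ hsum u = 0 := by
    rw [← hsu]; rcases hs with h | h
    · right; exact h
    · left; rw [h]; norm_num
  have hsv : hsum v = 1 - hsum u := by
    rw [← hx] at hsy
    simp only [hsum_append, hsum_cons, stepVal, Bool.false_eq_true, if_false] at hsy
    omega
  have hg' : g'Map y = u ++ true :: v := by
    show y.set p true = _
    conv_lhs => rw [← hx]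
    rw [← hu_len]
    exact set_append_length u false v true
  have hxlen : (g'Map y).length = 2*k := by rw [← hlen]; exact List.length_set
  have hxcnt : (g'Map y).count true = k+1 := by
    rw [← hx] at hcnt
    rw [hg']
    simp only [List.count_append, List.count_cons] at hcnt ⊢
    norm_num at hcnt ⊢
    omega
  have F1 : (cU 0 u 0 : ℤ) - cD 1 u 0 = if hsum u = 1 then 1 else 0 := by
    rw [crossing' 0 1 (by norm_num) u 0]
    split_ifs <;> omega
  have F2 : (cU (-1) v (hsum u - 1) : ℤ) - cD 0 v (hsum u - 1) = if hsum u = 0 then 1 else 0 := by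
    rw [crossing' (-1) 0 (by norm_num) v (hsum u - 1), hsv]
    split_ifs <;> omega
  have F3 : cD 0 u 0 + cD 1 u 0 = dstart y 0 - 1 := by
    have h := filter_range_take_eq_cnt y
      (fun b h => !b && (decide (h = 0) || decide (h = (0:ℤ)+1))) qB p hpn.le
      (by intro i _; rw [hqBdef]; simp [isD])
    rw [cntD_two 0 ((0:ℤ)+1) (by norm_num)] at h
    have h01 : cD ((0:ℤ)+1) u 0 = cD 1 u 0 := by norm_num
    rw [← hu_def, h01] at h
    omega
  have hd0 : dstart y 0
      = cD 0 u 0 + (if hsum u = 0 then 1 else 0) + cD 0 v (hsum u - 1) := by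
    rw [hd0b]
    conv_lhs => rw [← hx]
    unfold cD
    rw [cnt_append, cnt_cons]
    simp only [hsum_append, zero_add, stepVal, Bool.not_false, Bool.true_and,
      decide_eq_true_eq, Bool.false_eq_true, if_false]
    rw [show cnt (fun b h => !b && decide (h = 0)) v (hsum u + -1)
        = cnt (fun b h => !b && decide (h = 0)) v (hsum u - 1) from
      cD_trans 0 0 v (hsum u + -1) (hsum u - 1) (by ring)]
    split_ifs <;> omega
  -- now the x' = g'Map y side
  set qA : ℕ → Bool :=
    fun i => isU (g'Map y) i &&
      (decide (pathHeight (g'Map y) i = 1) || decide (pathHeight (g'Map y) i = 1-1))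
    with hqAdef
  have hA : utouch (g'Map y) 1 = (List.range (g'Map y).length).filter qA := rfl
  have hpxlen : p < (g'Map y).length := by
    rw [show (g'Map y).length = y.length from List.length_set]; exact hpn
  have hxtake : (g'Map y).take p = u := by
    rw [hg', ← hu_len, List.take_left]
  have hphx : pathHeight (g'Map y) p = hsum u := by
    rw [pathHeight_eq, hxtake]
  have hqAp : qA p = true := by
    rw [hqAdef]
    simp only [Bool.and_eq_true, Bool.or_eq_true, decide_eq_true_eq, isU]
    constructor
    · rw [hg', ← hu_len, getD_append_length]
    · rw [hphx]; rcases hS with h | h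
      · left; exact h
      · right; rw [h]; norm_num
  have F4 : ustart (g'Map y) 1
      = cU 1 u 0 + (if hsum u = 1 then 1 else 0) + cU (-1) v (hsum u - 1) := by
    have hb : ustart (g'Map y) 1 = cU 1 (g'Map y) 0 := by
      apply filter_range_eq_cnt
      intro i _
      simp [isU]
    rw [hb, hg']
    unfold cU
    rw [cnt_append, cnt_cons]
    simp only [hsum_append, zero_add, stepVal, if_true, Bool.true_and, decide_eq_true_eq]
    rw [show cnt (fun b h => b && decide (h = 1)) v (hsum u + 1)
        = cnt (fun b h => b && decide (h = -1)) v (hsum u - 1) from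
      cU_trans 1 (-1) v (hsum u + 1) (hsum u - 1) (by ring)]
    split_ifs <;> omega
  have hcountA : ((List.range p).filter qA).length = ustart (g'Map y) 1 - 1 := by
    have h := filter_range_take_eq_cnt (g'Map y)
      (fun b h => b && (decide (h = 1) || decide (h = (1:ℤ)-1))) qA p hpxlen.le
      (by intro i _; rw [hqAdef]; simp [isU])
    rw [cntU_two 1 ((1:ℤ)-1) (by norm_num), hxtake] at h
    have h10 : cU ((1:ℤ)-1) u 0 = cU 0 u 0 := by norm_num
    rw [h10] at h
    rw [h]
    rcases hS with hS1 | hS0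
    · rw [hS1] at F1 F2 hd0 F4
      norm_num at F1 F2 hd0 F4
      omega
    · rw [hS0] at F1 F2 hd0 F4
      norm_num at F1 F2 hd0 F4
      omega
  have hhIdx : hIdx (g'Map y) = p := by
    obtain ⟨_, hget⟩ := getD_filter_range_of (g'Map y).length p qA hpxlen hqAp
    rw [hcountA] at hget
    unfold hIdx
    rw [hA]
    exact hget
  have hhMap : hMap (g'Map y) = y := by
    show (g'Map y).set (hIdx (g'Map y)) false = y
    rw [hhIdx, hg', ← hu_len, set_append_length]
    exact hx
  exact ⟨hxlen, hxcnt, hhMap⟩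

-- ===== main =====

theorem h_bijection (k : ℕ) :
    Set.BijOn hMap (LSet k (k+1)) (LSet k k \ DyckSet k 0) ∧
    (∀ x ∈ LSet k (k+1), g'Map (hMap x) = x) ∧
    (∀ y ∈ LSet k k \ DyckSet k 0, hMap (g'Map y) = y) := by
  have hd1 : ∀ x ∈ LSet k (k+1), hMap x ∈ LSet k k \ DyckSet k 0 ∧ g'Map (hMap x) = x := by
    rintro x ⟨hl, hc⟩
    obtain ⟨h1, h2, h3, h4⟩ := dir1 k x hl hc
    exact ⟨⟨⟨h1, h2⟩, fun h => h3 h.2.2⟩, h4⟩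
  have hd2 : ∀ y ∈ LSet k k \ DyckSet k 0, g'Map y ∈ LSet k (k+1) ∧ hMap (g'Map y) = y := by
    rintro y ⟨⟨hl, hc⟩, hnd⟩
    have hfl : flaws y ≠ 0 := fun h => hnd ⟨hl, hc, h⟩
    obtain ⟨h1, h2, h3⟩ := dir2 k y hl hc hfl
    exact ⟨⟨h1, h2⟩, h3⟩
  refine ⟨Set.InvOn.bijOn (f' := g'Map) ⟨?_, ?_⟩ ?_ ?_, ?_, ?_⟩
  · intro x hx; exact (hd1 x hx).2
  · intro y hy; exact (hd2 y hy).2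
  · intro x hx; exact (hd1 x hx).1
  · intro y hy; exact (hd2 y hy).1
  · intro x hx; exact (hd1 x hx).2
  · intro y hy; exact (hd2 y hy).2
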